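/- Let n ≥ 2 and let B_n be the chained Bell operator Σ_{i=1}^n (A_i ⊗ B_i + A_{i+1} ⊗ B_i) (with A_{n+1} = −A_1) where A_i, B_i are arbitrary self-adjoint operators on a Hilbert space with A_i² = B_i² = 1 and all A_i commute with all B_j. Then the operator norm of B_n is at most 2n·cos(π/(2n)). -/

import Mathlib

open ContinuousLinearMap Finset

section Helpers

open Real

variable {H : Type*} [NormedAddCommGroup H] [InnerProductSpace ℂ H]

local notation "⟪" x ", " y "⟫" => @inner ℂ _ _ x y

private lemma cbqb_re_inner_le_one (u v : H) (hu : ‖u‖ = 1) (hv : ‖v‖ = 1) :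
    (⟪u, v⟫).re ≤ 1 := by
  have h := re_inner_le_norm (𝕜 := ℂ) u v
  rw [hu, hv] at h
  simpa [RCLike.re_to_complex] using h

private lemma cbqb_neg_one_le_re_inner (u v : H) (hu : ‖u‖ = 1) (hv : ‖v‖ = 1) :
    -1 ≤ (⟪u, v⟫).re := by
  have h := re_inner_le_norm (𝕜 := ℂ) (-u) v
  rw [norm_neg, hu, hv, inner_neg_left] at h
  simp only [RCLike.re_to_complex, Complex.neg_re, one_mul] at h
  linarith

private lemma cbqb_norm_sub_smul_sq (v x : H) (c : ℝ) (hv : ‖v‖ = 1) (hx : ‖x‖ = 1)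
    (hc : (⟪x, v⟫).re = c) : ‖x - (c : ℂ) • v‖ ^ 2 = 1 - c ^ 2 := by
  have key := @norm_sub_sq ℂ _ _ _ _ x ((c : ℂ) • v)
  rw [inner_smul_right, norm_smul] at key
  simp only [RCLike.re_to_complex, Complex.re_ofReal_mul, hc, hx, hv, Complex.norm_real,
    Real.norm_eq_abs, mul_one] at key
  rw [key, sq_abs]
  ring

/-- Spherical triangle inequality for arccos of real parts of inner products. -/
private lemma cbqb_arccos_triangle (u v w : H) (hu : ‖u‖ = 1) (hv : ‖v‖ = 1) (hw : ‖w‖ = 1) :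
    Real.arccos (⟪u, w⟫).re ≤ Real.arccos (⟪u, v⟫).re + Real.arccos (⟪v, w⟫).re := by
  set a : ℝ := (⟪u, v⟫).re with ha
  set b : ℝ := (⟪v, w⟫).re with hb
  have ha1 : a ≤ 1 := cbqb_re_inner_le_one u v hu hv
  have ha2 : -1 ≤ a := cbqb_neg_one_le_re_inner u v hu hv
  have hb1 : b ≤ 1 := cbqb_re_inner_le_one v w hv hw
  have hb2 : -1 ≤ b := cbqb_neg_one_le_re_inner v w hv hw
  by_cases hcase : π ≤ arccos a + arccos b
  · exact le_trans (Real.arccos_le_pi _) hcase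
  push_neg at hcase
  set p : H := u - (a : ℂ) • v with hp
  set q : H := w - (b : ℂ) • v with hq
  have hpn : ‖p‖ ^ 2 = 1 - a ^ 2 := cbqb_norm_sub_smul_sq v u a hv hu rfl
  have hqn : ‖q‖ ^ 2 = 1 - b ^ 2 :=
    cbqb_norm_sub_smul_sq v w b hv hw (by rw [← inner_conj_symm, Complex.conj_re])
  have hvv : (⟪v, v⟫ : ℂ) = 1 := by
    rw [inner_self_eq_norm_sq_to_K, hv]; norm_num
  have hpq : (⟪p, q⟫).re = (⟪u, w⟫).re - a * b := by
    simp only [hp, hq, inner_sub_left, inner_sub_right, inner_smul_left, inner_smul_right,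
      hvv, mul_one, Complex.conj_ofReal, Complex.sub_re, Complex.re_ofReal_mul]
    have h3 : (⟪v, w⟫ : ℂ).re = b := rfl
    rw [h3]
    rw [Complex.ofReal_re, ← ha]
    ring
  have hcs : -(‖p‖ * ‖q‖) ≤ (⟪p, q⟫).re := by
    have h := re_inner_le_norm (𝕜 := ℂ) (-p) q
    rw [norm_neg, inner_neg_left] at h
    simp only [RCLike.re_to_complex, Complex.neg_re] at h
    linarith
  have hpnorm : ‖p‖ = Real.sin (arccos a) := by
    rw [Real.sin_arccos, ← hpn, Real.sqrt_sq (norm_nonneg _)]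
  have hqnorm : ‖q‖ = Real.sin (arccos b) := by
    rw [Real.sin_arccos, ← hqn, Real.sqrt_sq (norm_nonneg _)]
  have hkey : Real.cos (arccos a + arccos b) ≤ (⟪u, w⟫).re := by
    rw [Real.cos_add, Real.cos_arccos ha2 ha1, Real.cos_arccos hb2 hb1]
    rw [hpnorm, hqnorm] at hcs
    linarith [hpq ▸ hcs]
  calc arccos (⟪u, w⟫).re ≤ arccos (Real.cos (arccos a + arccos b)) := by
        rw [Real.arccos_eq_pi_div_two_sub_arcsin, Real.arccos_eq_pi_div_two_sub_arcsin]
        have := Real.monotone_arcsin hkey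
        linarith
    _ = arccos a + arccos b :=
        Real.arccos_cos (add_nonneg (Real.arccos_nonneg _) (Real.arccos_nonneg _)) hcase.le

/-- Chained triangle inequality. -/
private lemma cbqb_arccos_chain (u : ℕ → H) (n : ℕ)
    (hu : ∀ i, 1 ≤ i → i ≤ n + 1 → ‖u i‖ = 1) :
    ∀ k, k ≤ n → Real.arccos (⟪u 1, u (k + 1)⟫).re ≤
      ∑ i ∈ Icc 1 k, Real.arccos (⟪u i, u (i + 1)⟫).re := by
  intro k
  induction k with
  | zero =>
    intro _
    have h1 : ‖u 1‖ = 1 := hu 1 le_rfl (by omega)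
    have : (⟪u 1, u 1⟫ : ℂ) = 1 := by
      rw [inner_self_eq_norm_sq_to_K, h1]; norm_num
    simp [this, h1, Real.arccos_one]
  | succ k ih =>
    intro hk
    have h1 : ‖u 1‖ = 1 := hu 1 le_rfl (by omega)
    have h2 : ‖u (k + 1)‖ = 1 := hu (k + 1) (by omega) (by omega)
    have h3 : ‖u (k + 2)‖ = 1 := hu (k + 2) (by omega) (by omega)
    have htri := cbqb_arccos_triangle (u 1) (u (k + 1)) (u (k + 2)) h1 h2 h3
    rw [Finset.sum_Icc_succ_top (by omega : 1 ≤ k + 1)]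
    calc Real.arccos (⟪u 1, u (k + 1 + 1)⟫).re
        ≤ Real.arccos (⟪u 1, u (k + 1)⟫).re + Real.arccos (⟪u (k + 1), u (k + 2)⟫).re := htri
      _ ≤ (∑ i ∈ Icc 1 k, Real.arccos (⟪u i, u (i + 1)⟫).re) +
            Real.arccos (⟪u (k + 1), u (k + 1 + 1)⟫).re := by
          exact add_le_add_left (ih (by omega)) _

/-- Jensen step. -/
private lemma cbqb_jensen (n : ℕ) (hn : 1 ≤ n) (φ : ℕ → ℝ)
    (h0 : ∀ i ∈ Icc 1 n, 0 ≤ φ i) (hπ : ∀ i ∈ Icc 1 n, φ i ≤ π)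
    (hsum : π ≤ ∑ i ∈ Icc 1 n, φ i) :
    ∑ i ∈ Icc 1 n, Real.cos (φ i / 2) ≤ n * Real.cos (π / (2 * n)) := by
  have hnpos : (0 : ℝ) < n := by exact_mod_cast hn
  have hcard : (Icc 1 n).card = n := by rw [Nat.card_Icc]; omega
  have hconc : ConcaveOn ℝ (Set.Icc (-(π / 2)) (π / 2)) Real.cos :=
    strictConcaveOn_cos_Icc.concaveOn
  have hjensen := hconc.le_map_sum (t := Icc 1 n) (w := fun _ => 1 / (n : ℝ))
    (p := fun i => φ i / 2)
    (fun i _ => by positivity)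
    (by rw [Finset.sum_const, hcard, nsmul_eq_mul]; field_simp)
    (fun i hi => by
      constructor
      · have := h0 i hi; have := Real.pi_pos; linarith
      · have := hπ i hi; linarith)
  set S := ∑ i ∈ Icc 1 n, φ i with hS
  have hmean : ∑ i ∈ Icc 1 n, 1 / (n : ℝ) * (φ i / 2) = S / (2 * n) := by
    rw [← Finset.mul_sum, ← Finset.sum_div, ← hS]
    ring
  simp only [smul_eq_mul] at hjensen
  rw [hmean] at hjensen
  have hSle : S ≤ n * π := by
    calc S ≤ ∑ _i ∈ Icc 1 n, π := Finset.sum_le_sum hπ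
      _ = n * π := by rw [Finset.sum_const, hcard, nsmul_eq_mul]
  have hcos : Real.cos (S / (2 * n)) ≤ Real.cos (π / (2 * n)) := by
    apply Real.cos_le_cos_of_nonneg_of_le_pi (by positivity)
    · rw [div_le_iff₀ (by positivity)]
      nlinarith [Real.pi_pos]
    · gcongr
  have h2 : (1 / (n : ℝ)) * ∑ i ∈ Icc 1 n, Real.cos (φ i / 2) ≤ Real.cos (π / (2 * n)) := by
    rw [Finset.mul_sum]; exact hjensen.trans hcos
  calc ∑ i ∈ Icc 1 n, Real.cos (φ i / 2)
      = n * ((1 / n) * ∑ i ∈ Icc 1 n, Real.cos (φ i / 2)) := by field_simp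
    _ ≤ n * Real.cos (π / (2 * n)) := by
        exact mul_le_mul_of_nonneg_left h2 (le_of_lt hnpos)

end Helpers

/-- Norm preservation for a self-adjoint involution. -/
private lemma cbqb_norm_apply {H : Type*} [NormedAddCommGroup H] [InnerProductSpace ℂ H]
    [CompleteSpace H] (T : H →L[ℂ] H) (hT : IsSelfAdjoint T) (hT2 : T ∘L T = 1)
    (ψ : H) (hψ : ‖ψ‖ = 1) : ‖T ψ‖ = 1 := by
  have hadj : ContinuousLinearMap.adjoint T = T := hT
  have h1 : (inner ℂ (T ψ) (T ψ) : ℂ) = inner ℂ ψ ψ := by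
    calc (inner ℂ (T ψ) (T ψ) : ℂ) = inner ℂ ((ContinuousLinearMap.adjoint T) ψ) (T ψ) := by
          rw [hadj]
      _ = inner ℂ ψ (T (T ψ)) := ContinuousLinearMap.adjoint_inner_left T (T ψ) ψ
      _ = inner ℂ ψ ((T ∘L T) ψ) := rfl
      _ = inner ℂ ψ ψ := by rw [hT2]; rfl
  rw [inner_self_eq_norm_sq_to_K, inner_self_eq_norm_sq_to_K] at h1
  have h2 : ‖T ψ‖ ^ 2 = ‖ψ‖ ^ 2 := by exact_mod_cast h1
  rw [hψ] at h2
  nlinarith [norm_nonneg (T ψ)]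

/-- Move a self-adjoint operator to the other side of the inner product. -/
private lemma cbqb_inner_move {H : Type*} [NormedAddCommGroup H] [InnerProductSpace ℂ H]
    [CompleteSpace H] (T : H →L[ℂ] H) (hT : IsSelfAdjoint T) (x y : H) :
    (inner ℂ x (T y) : ℂ) = inner ℂ (T x) y := by
  have hadj : ContinuousLinearMap.adjoint T = T := hT
  rw [← ContinuousLinearMap.adjoint_inner_left T y x, hadj]

theorem chained_bell_quantum_bound
    {H : Type*} [NormedAddCommGroup H] [InnerProductSpace ℂ H] [CompleteSpace H]
    (n : ℕ) (hn : 2 ≤ n)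
    (A B : ℕ → (H →L[ℂ] H))
    (hAsa : ∀ i, 1 ≤ i → i ≤ n → IsSelfAdjoint (A i))
    (hBsa : ∀ i, 1 ≤ i → i ≤ n → IsSelfAdjoint (B i))
    (hA2 : ∀ i, 1 ≤ i → i ≤ n → A i ∘L A i = 1)
    (hB2 : ∀ i, 1 ≤ i → i ≤ n → B i ∘L B i = 1)
    (hAn1 : A (n + 1) = -A 1)
    (hcomm : ∀ i j, A i ∘L B j = B j ∘L A i) :
    ∀ ψ : H, ‖ψ‖ = 1 →
      ((inner ℂ ψ ((∑ i ∈ Finset.Icc 1 n,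
          (A i ∘L B i + A (i + 1) ∘L B i)) ψ) : ℂ)).re ≤
        2 * n * Real.cos (Real.pi / (2 * n)) := by
  intro ψ hψ
  have hπpos := Real.pi_pos
  set u : ℕ → H := fun i => A i ψ with hu_def
  have hA1sa : IsSelfAdjoint (A 1) := hAsa 1 le_rfl (by omega)
  have hAsa' : ∀ i, 1 ≤ i → i ≤ n + 1 → IsSelfAdjoint (A i) := by
    intro i h1 h2
    rcases Nat.lt_or_ge i (n + 1) with h | h
    · exact hAsa i h1 (by omega)
    · have : i = n + 1 := by omega
      rw [this, hAn1]; exact hA1sa.neg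
  have hu_norm : ∀ i, 1 ≤ i → i ≤ n + 1 → ‖u i‖ = 1 := by
    intro i h1 h2
    rcases Nat.lt_or_ge i (n + 1) with h | h
    · exact cbqb_norm_apply (A i) (hAsa i h1 (by omega)) (hA2 i h1 (by omega)) ψ hψ
    · have hi : i = n + 1 := by omega
      show ‖A i ψ‖ = 1
      rw [hi, hAn1]
      simp only [ContinuousLinearMap.neg_apply, norm_neg]
      exact cbqb_norm_apply (A 1) hA1sa (hA2 1 le_rfl (by omega)) ψ hψ
  set t : ℕ → ℝ := fun i => (inner ℂ (u i) (u (i + 1)) : ℂ).re with ht_def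
  set φ : ℕ → ℝ := fun i => Real.arccos (t i) with hφ_def
  have ht_bounds : ∀ i, 1 ≤ i → i ≤ n → -1 ≤ t i ∧ t i ≤ 1 := fun i h1 h2 =>
    ⟨cbqb_neg_one_le_re_inner _ _ (hu_norm i h1 (by omega)) (hu_norm (i+1) (by omega) (by omega)),
     cbqb_re_inner_le_one _ _ (hu_norm i h1 (by omega)) (hu_norm (i+1) (by omega) (by omega))⟩
  -- Step A: termwise Cauchy-Schwarz bound
  have hstep : ∀ i ∈ Finset.Icc 1 n,
      (inner ℂ ψ (((A i ∘L B i) + (A (i + 1) ∘L B i)) ψ) : ℂ).re ≤ ‖u i + u (i + 1)‖ := by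
    intro i hi
    simp only [Finset.mem_Icc] at hi
    obtain ⟨h1, h2⟩ := hi
    have hBn : ‖B i ψ‖ = 1 := cbqb_norm_apply (B i) (hBsa i h1 h2) (hB2 i h1 h2) ψ hψ
    have e1 : (inner ℂ ψ (((A i ∘L B i) + (A (i + 1) ∘L B i)) ψ) : ℂ)
        = inner ℂ (u i + u (i + 1)) (B i ψ) := by
      rw [ContinuousLinearMap.add_apply, ContinuousLinearMap.comp_apply,
        ContinuousLinearMap.comp_apply, inner_add_right,
        cbqb_inner_move (A i) (hAsa i h1 h2),
        cbqb_inner_move (A (i + 1)) (hAsa' (i + 1) (by omega) (by omega)), inner_add_left]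
    rw [e1]
    have h := re_inner_le_norm (𝕜 := ℂ) (u i + u (i + 1)) (B i ψ)
    rw [hBn, mul_one] at h
    simpa [RCLike.re_to_complex, inner_add_left] using h
  -- Step B: norm equals 2 cos (φ/2)
  have hnormcos : ∀ i, 1 ≤ i → i ≤ n → ‖u i + u (i + 1)‖ = 2 * Real.cos (φ i / 2) := by
    intro i h1 h2
    obtain ⟨htl, htu⟩ := ht_bounds i h1 h2
    have hφ0 : 0 ≤ φ i := Real.arccos_nonneg _
    have hφπ : φ i ≤ Real.pi := Real.arccos_le_pi _
    have hcosφ : Real.cos (φ i) = t i := Real.cos_arccos htl htu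
    have hc0 : 0 ≤ Real.cos (φ i / 2) :=
      Real.cos_nonneg_of_mem_Icc ⟨by linarith, by linarith⟩
    have hsq : ‖u i + u (i + 1)‖ ^ 2 = (2 * Real.cos (φ i / 2)) ^ 2 := by
      have hn1 := hu_norm i h1 (by omega)
      have hn2 := hu_norm (i + 1) (by omega) (by omega)
      have key := @norm_add_sq ℂ _ _ _ _ (u i) (u (i + 1))
      rw [hn1, hn2] at key
      have hre : RCLike.re (inner ℂ (u i) (u (i + 1)) : ℂ) = t i := rfl
      rw [hre] at key
      have hch : Real.cos (φ i / 2) ^ 2 = 1 / 2 + Real.cos (φ i) / 2 := by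
        have h := Real.cos_sq (φ i / 2)
        rwa [show 2 * (φ i / 2) = φ i by ring] at h
      rw [key, mul_pow, hch, hcosφ]; ring
    nlinarith [norm_nonneg (u i + u (i + 1))]
  -- Step C: chained triangle inequality gives total angle ≥ π
  have hchain : Real.pi ≤ ∑ i ∈ Finset.Icc 1 n, φ i := by
    have h := cbqb_arccos_chain u n hu_norm n le_rfl
    have hlast : (inner ℂ (u 1) (u (n + 1)) : ℂ).re = -1 := by
      have hneg : u (n + 1) = -u 1 := by
        show A (n + 1) ψ = -(A 1 ψ)
        rw [hAn1]; rfl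
      rw [hneg, inner_neg_right]
      have h1 : ‖u 1‖ = 1 := hu_norm 1 le_rfl (by omega)
      rw [inner_self_eq_norm_sq_to_K, h1]
      norm_num
    rw [hlast, Real.arccos_neg_one] at h
    exact h
  -- Step D: Jensen
  have hjensen : ∑ i ∈ Finset.Icc 1 n, Real.cos (φ i / 2) ≤ n * Real.cos (Real.pi / (2 * n)) :=
    cbqb_jensen n (by omega) φ (fun i _ => Real.arccos_nonneg _)
      (fun i _ => Real.arccos_le_pi _) hchain
  -- combine
  calc ((inner ℂ ψ ((∑ i ∈ Finset.Icc 1 n, (A i ∘L B i + A (i + 1) ∘L B i)) ψ) : ℂ)).re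
      = ∑ i ∈ Finset.Icc 1 n, (inner ℂ ψ ((A i ∘L B i + A (i + 1) ∘L B i) ψ) : ℂ).re := by
        rw [ContinuousLinearMap.sum_apply, inner_sum, Complex.re_sum]
    _ ≤ ∑ i ∈ Finset.Icc 1 n, ‖u i + u (i + 1)‖ := Finset.sum_le_sum hstep
    _ = ∑ i ∈ Finset.Icc 1 n, 2 * Real.cos (φ i / 2) := by
        apply Finset.sum_congr rfl
        intro i hi
        simp only [Finset.mem_Icc] at hi
        exact hnormcos i hi.1 hi.2
    _ = 2 * ∑ i ∈ Finset.Icc 1 n, Real.cos (φ i / 2) := by rw [Finset.mul_sum]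
    _ ≤ 2 * (n * Real.cos (Real.pi / (2 * n))) := by linarith
    _ = 2 * n * Real.cos (Real.pi / (2 * n)) := by ring
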